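/- Let û₂ > k satisfy: for all x ≥ û₂, (c − b·k)/(1 − a) < x + ln((x − k)/x²). Then for every (x,y) with x ≥ û₂ and y ≤ v̂, the first coordinate strictly decreases under the Chialvo map: x̄ < x, where (x̄, ȳ) = f(x,y). -/
import Mathlib


/-- Moving leftward in the closure of region `Ĉ₂`: if `û₂ > k` satisfies the
defining inequality, then for `x ≥ û₂` and `y ≤ v̂` the first coordinate strictly
decreases under the Chialvo map. -/
theorem chialvo_C2_leftward
    (a b c k : ℝ)
    (ha : a ∈ Set.Ioo (0:ℝ) 1) (hb : b ∈ Set.Ioo (0:ℝ) 1)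
    (hc : c ∈ Set.Ioo (0:ℝ) 1) (hk : 0 < k)
    (f : ℝ × ℝ → ℝ × ℝ)
    (hf : ∀ p : ℝ × ℝ,
      f p = (p.1 ^ 2 * Real.exp (p.2 - p.1) + k, a * p.2 - b * p.1 + c))
    (v : ℝ) (hv : v = (c - b * k) / (1 - a))
    (u2 : ℝ) (hu2k : u2 > k)
    (hu2 : ∀ x ≥ u2, (c - b * k) / (1 - a) < x + Real.log ((x - k) / x ^ 2)) :
    ∀ p : ℝ × ℝ, p.1 ≥ u2 → p.2 ≤ v → (f p).1 < p.1 := by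
  intro p hx hy
  set x := p.1
  set y := p.2
  have hxk : k < x := lt_of_lt_of_le hu2k hx
  have hx0 : 0 < x := hk.trans hxk
  have hpos : 0 < (x - k) / x ^ 2 := div_pos (by linarith) (by positivity)
  have h1 := hu2 x hx
  have h2 : y - x < Real.log ((x - k) / x ^ 2) := by
    rw [hv] at hy; linarith
  have h3 : Real.exp (y - x) < (x - k) / x ^ 2 := by
    calc Real.exp (y - x) < Real.exp (Real.log ((x - k) / x ^ 2)) :=
          Real.exp_lt_exp.mpr h2
      _ = (x - k) / x ^ 2 := Real.exp_log hpos
  have h4 : x ^ 2 * Real.exp (y - x) < x - k := by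
    have := (mul_lt_mul_iff_right₀ (show (0:ℝ) < x ^ 2 by positivity)).mpr h3
    rwa [mul_div_cancel₀ _ (by positivity : (x:ℝ) ^ 2 ≠ 0)] at this
  rw [hf]
  simpa using by linarith
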